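/- Let p be an odd prime and 1 ≤ s,t ≤ p−1. The set of values taken by r(A,B,B), as A and B range over all subsets of Z_p of cardinality s and t respectively, is exactly the closed integer interval [f(s,t), g(s,t)]. -/

import Mathlib

def fBound (p s t : ℤ) : ℤ :=
  if 2 * t ≤ p - s + 1 then 0
  else if 2 * t ≤ p + s - 2 then (s + 2 * t - p) ^ 2 / 4
  else s * (2 * t - p)

def gBound (p s t : ℤ) : ℤ :=
  if 2 * t ≤ s then t ^ 2
  else if 2 * t ≤ 2 * p - s - 1 then (s * (4 * t - s) + 3) / 4
  else s * (2 * t - p) + (p - t) ^ 2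

namespace Stmt17

set_option linter.unusedSectionVars false

variable {p : ℕ} [NeZero p]

def reps (A B : Finset (ZMod p)) (x : ZMod p) : Finset (ZMod p × ZMod p) :=
  (A ×ˢ B).filter (fun q => q.1 + q.2 = x)

def phi (A B : Finset (ZMod p)) (m : ℕ) : ℕ :=
  ∑ x : ZMod p, min (reps A B x).card m

lemma mem_reps {A B : Finset (ZMod p)} {x : ZMod p} {q : ZMod p × ZMod p} :
    q ∈ reps A B x ↔ q.1 ∈ A ∧ q.2 ∈ B ∧ q.1 + q.2 = x := by
  simp [reps, Finset.mem_filter, Finset.mem_product, and_assoc]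

lemma reps_card_le_right (A B : Finset (ZMod p)) (x : ZMod p) :
    (reps A B x).card ≤ B.card := by
  apply Finset.card_le_card_of_injOn (fun q => q.2)
  · intro q hq; exact (mem_reps.1 hq).2.1
  · intro q hq r hr h
    simp only [Finset.mem_coe, mem_reps] at hq hr
    have : q.1 = r.1 := by
      have := hq.2.2.trans hr.2.2.symm
      simp only [h] at this
      exact add_right_cancel this
    exact Prod.ext this h

lemma reps_card_le_left (A B : Finset (ZMod p)) (x : ZMod p) :
    (reps A B x).card ≤ A.card := by
  apply Finset.card_le_card_of_injOn (fun q => q.1)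
  · intro q hq; exact (mem_reps.1 hq).1
  · intro q hq r hr h
    simp only [Finset.mem_coe, mem_reps] at hq hr
    have : q.2 = r.2 := by
      have := hq.2.2.trans hr.2.2.symm
      simp only [h] at this
      exact add_left_cancel this
    exact Prod.ext h this

lemma sum_reps_card (A B : Finset (ZMod p)) :
    ∑ x : ZMod p, (reps A B x).card = A.card * B.card := by
  rw [← Finset.card_product]
  exact (Finset.card_eq_sum_card_fiberwise
    (f := fun q : ZMod p × ZMod p => q.1 + q.2) (t := Finset.univ)
    (fun q _ => Finset.mem_univ _)).symm

lemma reps_mono {A B A' B' : Finset (ZMod p)} (hA : A ⊆ A') (hB : B ⊆ B') (x : ZMod p) :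
    reps A B x ⊆ reps A' B' x := by
  intro q hq; rw [mem_reps] at hq ⊢; exact ⟨hA hq.1, hB hq.2.1, hq.2.2⟩

section Transform

variable (A B : Finset (ZMod p)) (e : ZMod p)

def Aup : Finset (ZMod p) := A ∪ B.image (· + e)
def Bdn : Finset (ZMod p) := B.filter (fun b => b + e ∈ A)
def Ares : Finset (ZMod p) := A \ (Bdn A B e).image (· + e)
def Bres : Finset (ZMod p) := B \ Bdn A B e

lemma mem_Bdn {b : ZMod p} : b ∈ Bdn A B e ↔ b ∈ B ∧ b + e ∈ A := by
  simp [Bdn]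

lemma card_Aup_add_card_Bdn :
    (Aup A B e).card + (Bdn A B e).card = A.card + B.card := by
  have himg : A ∩ B.image (· + e) = (Bdn A B e).image (· + e) := by
    ext x
    simp only [Finset.mem_inter, Finset.mem_image, mem_Bdn]
    constructor
    · rintro ⟨hxA, b, hb, rfl⟩; exact ⟨b, ⟨hb, hxA⟩, rfl⟩
    · rintro ⟨b, ⟨hb, hbA⟩, rfl⟩; exact ⟨hbA, b, hb, rfl⟩
  have hinj : ∀ (s : Finset (ZMod p)), (s.image (· + e)).card = s.card := fun s =>
    Finset.card_image_of_injective _ (add_left_injective e)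
  have h := Finset.card_union_add_card_inter A (B.image (· + e))
  rw [himg, hinj] at h
  rw [Aup, h, hinj]

lemma key_card (x : ZMod p) :
    (reps (Aup A B e) (Bdn A B e) x).card + (reps (Ares A B e) (Bres A B e) x).card
      ≤ (reps A B x).card := by
  classical
  set ψ : ZMod p × ZMod p → ZMod p × ZMod p :=
    fun q => if q.1 ∈ A then q else (q.2 + e, q.1 - e) with hψ
  have hmaps : ∀ q ∈ reps (Aup A B e) (Bdn A B e) x,
      ψ q ∈ reps A B x \ reps (Ares A B e) (Bres A B e) x := by
    intro q hq
    rw [mem_reps] at hq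
    obtain ⟨hq1, hq2, hqs⟩ := hq
    have hq2' := (mem_Bdn A B e).1 hq2
    by_cases h1 : q.1 ∈ A
    · rw [Finset.mem_sdiff, hψ]
      simp only [if_pos h1]
      refine ⟨mem_reps.2 ⟨h1, hq2'.1, hqs⟩, fun hc => ?_⟩
      rw [mem_reps] at hc
      exact (Finset.mem_sdiff.1 hc.2.1).2 hq2
    · have hq1' : q.1 ∈ B.image (· + e) := by
        rcases Finset.mem_union.1 hq1 with h | h
        · exact absurd h h1
        · exact h
      obtain ⟨bb, hbb, hbbe⟩ := Finset.mem_image.1 hq1'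
      have hsub : q.1 - e ∈ B := by rw [← hbbe]; simpa using hbb
      rw [Finset.mem_sdiff, hψ]
      simp only [if_neg h1]
      constructor
      · refine mem_reps.2 ⟨hq2'.2, hsub, ?_⟩
        have : q.2 + e + (q.1 - e) = q.1 + q.2 := by ring
        rw [this, hqs]
      · intro hc
        rw [mem_reps] at hc
        have : q.2 + e ∈ (Bdn A B e).image (· + e) := Finset.mem_image_of_mem _ hq2
        exact (Finset.mem_sdiff.1 hc.1).2 this
  have hinj : Set.InjOn ψ (reps (Aup A B e) (Bdn A B e) x) := by
    intro q hq r hr h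
    simp only [Finset.mem_coe, mem_reps] at hq hr
    have hq2 : q.2 + e ∈ A := ((mem_Bdn A B e).1 hq.2.1).2
    have hr2 : r.2 + e ∈ A := ((mem_Bdn A B e).1 hr.2.1).2
    rw [hψ] at h
    by_cases h1 : q.1 ∈ A <;> by_cases h2 : r.1 ∈ A
    · simpa [h1, h2] using h
    · exfalso
      simp only [if_pos h1, if_neg h2] at h
      apply h2
      have hsnd := congrArg Prod.snd h
      simp only at hsnd
      have : r.1 = q.2 + e := by rw [hsnd]; ring
      rw [this]; exact hq2
    · exfalso
      simp only [if_neg h1, if_pos h2] at h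
      apply h1
      have hsnd := congrArg Prod.snd h
      simp only at hsnd
      have : q.1 = r.2 + e := by rw [← hsnd]; ring
      rw [this]; exact hr2
    · simp only [if_neg h1, if_neg h2, Prod.mk.injEq] at h
      have e1 : q.1 = r.1 := by
        have := h.2
        have h3 : q.1 - e + e = r.1 - e + e := by rw [this]
        simpa using h3
      have e2 : q.2 = r.2 := by
        have := h.1
        have h3 : q.2 + e - e = r.2 + e - e := by rw [this]
        simpa using h3
      exact Prod.ext e1 e2
  have hcard1 : (reps (Aup A B e) (Bdn A B e) x).card
      ≤ (reps A B x \ reps (Ares A B e) (Bres A B e) x).card :=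
    Finset.card_le_card_of_injOn ψ hmaps hinj
  have hsub : reps (Ares A B e) (Bres A B e) x ⊆ reps A B x :=
    reps_mono (Finset.sdiff_subset) (Finset.sdiff_subset) x
  rw [Finset.card_sdiff_of_subset hsub] at hcard1
  have := Finset.card_le_card hsub
  omega

end Transform

lemma reps_univ_left (B : Finset (ZMod p)) (x : ZMod p) :
    (reps (Finset.univ) B x).card = B.card := by
  apply le_antisymm (reps_card_le_right _ _ _)
  apply Finset.card_le_card_of_injOn (fun b => (x - b, b))
  · intro b hb; exact mem_reps.2 ⟨Finset.mem_univ _, hb, by ring⟩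
  · intro a _ b _ h
    exact (Prod.ext_iff.1 h).2

lemma eq_univ_of_add_mem (hp : p.Prime) {A : Finset (ZMod p)} {δ : ZMod p} (hδ : δ ≠ 0)
    (hA : A.Nonempty) (hcl : ∀ a ∈ A, a + δ ∈ A) : A = Finset.univ := by
  haveI : Fact p.Prime := ⟨hp⟩
  obtain ⟨a, ha⟩ := hA
  have key : ∀ n : ℕ, a + n • δ ∈ A := by
    intro n
    induction n with
    | zero => simpa using ha
    | succ n ih =>
      have h2 := hcl _ ih
      have : a + n • δ + δ = a + (n + 1) • δ := by rw [succ_nsmul]; ring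
      rwa [this] at h2
  ext g
  simp only [Finset.mem_univ, iff_true]
  have hg : g = a + (((g - a) * δ⁻¹).val) • δ := by
    rw [nsmul_eq_mul, ZMod.natCast_val, ZMod.cast_id, mul_assoc,
      inv_mul_cancel₀ hδ, mul_one]
    ring
  rw [hg]
  exact key _

theorem pollard (hp : p.Prime) (m : ℕ) :
    ∀ (B A : Finset (ZMod p)), m ≤ A.card → m ≤ B.card → A.card + B.card ≤ p + m →
      m * (A.card + B.card) ≤ phi A B m + m * m := by
  induction m using Nat.strong_induction_on with
  | _ m ihm =>
  intro B
  induction B using Finset.strongInduction with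
  | _ B ihB =>
  intro A hmA hmB hN
  rcases Nat.eq_zero_or_pos m with hm0 | hm1
  · subst hm0; simp [phi]
  by_cases hbm : B.card ≤ m
  · have hBm : B.card = m := le_antisymm hbm hmB
    have hphi : phi A B m = A.card * B.card := by
      rw [← sum_reps_card A B]
      apply Finset.sum_congr rfl
      intro x _
      exact min_eq_left ((reps_card_le_right A B x).trans (by omega))
    have hgoal : m * (A.card + B.card) = phi A B m + m * m := by
      rw [hphi, hBm]; ring
    exact hgoal.le
  by_cases hstab : ∀ a ∈ A, ∀ b ∈ B, ∀ b' ∈ B, b' + a - b ∈ A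
  · have hB2 : 1 < B.card := by omega
    obtain ⟨b₁, hb₁, b₂, hb₂, hne⟩ := Finset.one_lt_card.1 hB2
    have hAne : A.Nonempty := Finset.card_pos.1 (by omega)
    have hδ : b₁ - b₂ ≠ 0 := sub_ne_zero.2 hne
    have hcl : ∀ a ∈ A, a + (b₁ - b₂) ∈ A := by
      intro a ha
      have h2 := hstab a ha b₂ hb₂ b₁ hb₁
      have heq : b₁ + a - b₂ = a + (b₁ - b₂) := by ring
      rwa [heq] at h2
    have hAuniv := eq_univ_of_add_mem hp hδ hAne hcl
    have hcardA : A.card = p := by rw [hAuniv, Finset.card_univ, ZMod.card]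
    have hphi : phi A B m = p * m := by
      unfold phi
      have h1 : ∀ x : ZMod p, min (reps A B x).card m = m := by
        intro x
        rw [hAuniv, reps_univ_left]
        exact min_eq_right hmB
      simp only [h1]
      rw [Finset.sum_const, Finset.card_univ, ZMod.card, smul_eq_mul]
    have hβ : B.card ≤ m := by omega
    calc m * (A.card + B.card) ≤ m * (p + m) := by
          apply Nat.mul_le_mul_left; omega
      _ = p * m + m * m := by ring
      _ = phi A B m + m * m := by rw [hphi]
  · push_neg at hstab
    obtain ⟨a, ha, b, hb, b', hb', hout⟩ := hstab
    set e := a - b with he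
    have hbB' : b ∈ Bdn A B e := by
      rw [mem_Bdn]
      refine ⟨hb, ?_⟩
      have : b + e = a := by rw [he]; ring
      rw [this]; exact ha
    have hb'B' : b' ∉ Bdn A B e := by
      rw [mem_Bdn]
      rintro ⟨-, hc⟩
      apply hout
      have : b' + a - b = b' + e := by rw [he]; ring
      rwa [this]
    have hssub : Bdn A B e ⊂ B :=
      ⟨Finset.filter_subset _ _, fun hsub => hb'B' (hsub hb')⟩
    have hcards := card_Aup_add_card_Bdn A B e
    have hk1 : 1 ≤ (Bdn A B e).card := Finset.card_pos.2 ⟨b, hbB'⟩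
    have hkβ : (Bdn A B e).card < B.card := Finset.card_lt_card hssub
    by_cases hkm : m ≤ (Bdn A B e).card
    · have hih := ihB (Bdn A B e) hssub (Aup A B e)
        (le_trans hmA (Finset.card_le_card Finset.subset_union_left)) hkm (by omega)
      have hmono : phi (Aup A B e) (Bdn A B e) m ≤ phi A B m := by
        apply Finset.sum_le_sum
        intro x _
        have := key_card A B e x
        exact min_le_min (by omega) le_rfl
      calc m * (A.card + B.card)
          = m * ((Aup A B e).card + (Bdn A B e).card) := by rw [hcards]
        _ ≤ phi (Aup A B e) (Bdn A B e) m + m * m := hih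
        _ ≤ phi A B m + m * m := by omega
    · push_neg at hkm
      have himgk : ((Bdn A B e).image (· + e)).card = (Bdn A B e).card :=
        Finset.card_image_of_injective _ (add_left_injective e)
      have hAcard_le : A.card ≤ (Ares A B e).card + (Bdn A B e).card := by
        have := Finset.card_le_card_sdiff_add_card (s := A) (t := (Bdn A B e).image (· + e))
        rw [himgk] at this
        exact this
      have hAresB : m - (Bdn A B e).card ≤ (Ares A B e).card := by omega
      have hBresB : (Bres A B e).card = B.card - (Bdn A B e).card :=
        Finset.card_sdiff_of_subset (Finset.filter_subset _ _)
      have hAressub : (Ares A B e).card ≤ A.card := Finset.card_le_card Finset.sdiff_subset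
      have hihm := ihm (m - (Bdn A B e).card) (by omega) (Bres A B e) (Ares A B e)
        hAresB (by omega) (by omega)
      have hpt : ∀ x : ZMod p,
          (reps (Aup A B e) (Bdn A B e) x).card
            + min (reps (Ares A B e) (Bres A B e) x).card (m - (Bdn A B e).card)
          ≤ min (reps A B x).card m := by
        intro x
        have h1 := key_card A B e x
        have h2 := reps_card_le_right (Aup A B e) (Bdn A B e) x
        omega
      have hsum : (Aup A B e).card * (Bdn A B e).card
          + phi (Ares A B e) (Bres A B e) (m - (Bdn A B e).card) ≤ phi A B m := by
        rw [← sum_reps_card (Aup A B e) (Bdn A B e), phi, phi, ← Finset.sum_add_distrib]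
        exact Finset.sum_le_sum (fun x _ => hpt x)
      -- final arithmetic over ℤ
      have hkm' : (Bdn A B e).card ≤ m := hkm.le
      have hkβ' : (Bdn A B e).card ≤ B.card := hkβ.le
      zify [hkm', hkβ'] at hihm hsum hAcard_le hcards hBresB ⊢
      have hau : ((Aup A B e).card : ℤ) = (A.card : ℤ) + B.card - (Bdn A B e).card := by
        linarith
      have hauK : ((Aup A B e).card : ℤ) * (Bdn A B e).card
          = ((A.card : ℤ) + B.card - (Bdn A B e).card) * (Bdn A B e).card := by
        rw [hau]
      have hmk : (0 : ℤ) ≤ (m : ℤ) - (Bdn A B e).card := by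
        have : ((Bdn A B e).card : ℤ) ≤ (m : ℤ) := by exact_mod_cast hkm'
        linarith
      have harlow : (A.card : ℤ) - (Bdn A B e).card ≤ ((Ares A B e).card : ℤ) := by
        linarith
      have hprod : ((m : ℤ) - (Bdn A B e).card)
            * (((A.card : ℤ) - (Bdn A B e).card) + ((Bres A B e).card : ℤ))
          ≤ ((m : ℤ) - (Bdn A B e).card) * (((Ares A B e).card : ℤ) + (Bres A B e).card) := by
        apply mul_le_mul_of_nonneg_left _ hmk
        linarith
      have hident : (m : ℤ) * ((A.card : ℤ) + B.card) =
          ((A.card : ℤ) + B.card - (Bdn A B e).card) * (Bdn A B e).card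
          + (((m : ℤ) - (Bdn A B e).card)
              * (((A.card : ℤ) - (Bdn A B e).card) + ((Bres A B e).card : ℤ))
            - ((m : ℤ) - (Bdn A B e).card) * ((m : ℤ) - (Bdn A B e).card))
          + (m : ℤ) * m := by
        rw [hBresB]
        ring
      linarith [hprod, hihm, hsum, hauK, hident]
def cnt (A B : Finset (ZMod p)) : ℕ :=
  ((A ×ˢ B ×ˢ B).filter (fun x => x.2.2 = x.1 + x.2.1)).card

lemma cnt_eq_sum_B (A B : Finset (ZMod p)) :
    cnt A B = ∑ c ∈ B, (reps A B c).card := by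
  rw [cnt, Finset.card_eq_sum_card_fiberwise
    (f := fun x : ZMod p × ZMod p × ZMod p => x.2.2) (t := B)
    (fun x hx => by
      simp only [Finset.mem_coe, Finset.mem_filter, Finset.mem_product] at hx
      exact hx.1.2.2)]
  apply Finset.sum_congr rfl
  intro c hc
  apply Finset.card_nbij' (fun x => (x.1, x.2.1)) (fun q => (q.1, q.2, c))
  · intro x hx
    simp only [Finset.mem_coe, Finset.mem_filter, Finset.mem_product] at hx
    simp only [Finset.mem_coe, mem_reps]
    exact ⟨hx.1.1.1, hx.1.1.2.1, by rw [← hx.1.2, hx.2]⟩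
  · intro q hq
    rw [Finset.mem_coe, mem_reps] at hq
    simp only [Finset.mem_coe, Finset.mem_filter, Finset.mem_product]
    exact ⟨⟨⟨hq.1, hq.2.1, hc⟩, hq.2.2.symm⟩, trivial⟩
  · intro x hx
    simp only [Finset.mem_coe, Finset.mem_filter, Finset.mem_product] at hx
    simp [← hx.2]
  · intro q hq
    simp

lemma cnt_eq_sum_A (A B : Finset (ZMod p)) :
    cnt A B = ∑ a ∈ A, (B.filter (fun b => a + b ∈ B)).card := by
  rw [cnt, Finset.card_eq_sum_card_fiberwise
    (f := fun x : ZMod p × ZMod p × ZMod p => x.1) (t := A)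
    (fun x hx => by
      simp only [Finset.mem_coe, Finset.mem_filter, Finset.mem_product] at hx
      exact hx.1.1)]
  apply Finset.sum_congr rfl
  intro a ha
  apply Finset.card_nbij' (fun x => x.2.1) (fun b => (a, b, a + b))
  · intro x hx
    simp only [Finset.mem_coe, Finset.mem_filter, Finset.mem_product] at hx
    simp only [Finset.mem_coe, Finset.mem_filter]
    refine ⟨hx.1.1.2.1, ?_⟩
    rw [← hx.2, ← hx.1.2]
    exact hx.1.1.2.2
  · intro b hb
    simp only [Finset.mem_coe, Finset.mem_filter] at hb
    simp only [Finset.mem_coe, Finset.mem_filter, Finset.mem_product]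
    exact ⟨⟨⟨ha, hb.1, hb.2⟩, trivial⟩, trivial⟩
  · intro x hx
    simp only [Finset.mem_coe, Finset.mem_filter, Finset.mem_product] at hx
    obtain ⟨⟨⟨h1, h2, h3⟩, h4⟩, h5⟩ := hx
    simp [← h5, ← h4]
  · intro b hb
    simp

lemma filter_card_ge (B : Finset (ZMod p)) (a : ZMod p) :
    B.card + B.card ≤ p + (B.filter (fun b => a + b ∈ B)).card := by
  have heq : B.filter (fun b => a + b ∈ B) = B ∩ B.image (· - a) := by
    ext b
    simp only [Finset.mem_filter, Finset.mem_inter, Finset.mem_image]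
    constructor
    · rintro ⟨hb, hab⟩
      exact ⟨hb, a + b, hab, by ring⟩
    · rintro ⟨hb, c, hc, rfl⟩
      have : a + (c - a) = c := by ring
      rw [this]
      exact ⟨hb, hc⟩
  have himg : (B.image (· - a)).card = B.card :=
    Finset.card_image_of_injective _ (fun u v h => by rwa [sub_left_inj] at h)
  have h1 := Finset.card_union_add_card_inter B (B.image (· - a))
  have h2 : (B ∪ B.image (· - a)).card ≤ p := by
    calc (B ∪ B.image (· - a)).card ≤ (Finset.univ : Finset (ZMod p)).card :=
          Finset.card_le_card (Finset.subset_univ _)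
      _ = p := by rw [Finset.card_univ, ZMod.card]
  rw [heq]
  omega

lemma reps_card_ge (A B : Finset (ZMod p)) (x : ZMod p) :
    A.card + B.card ≤ p + (reps A B x).card := by
  have heq : reps A B x = (A ×ˢ B).filter (fun q => q.1 + q.2 = x) := rfl
  have hbij : (reps A B x).card = (A ∩ B.image (fun b => x - b)).card := by
    apply Finset.card_nbij' (fun q => q.1) (fun a => (a, x - a))
    · intro q hq
      rw [Finset.mem_coe, mem_reps] at hq
      simp only [Finset.mem_coe, Finset.mem_inter, Finset.mem_image]
      exact ⟨hq.1, q.2, hq.2.1, by rw [← hq.2.2]; ring⟩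
    · intro a ha
      simp only [Finset.mem_coe, Finset.mem_inter, Finset.mem_image] at ha
      obtain ⟨haA, b, hb, hba⟩ := ha
      simp only [Finset.mem_coe, mem_reps]
      refine ⟨haA, ?_, by ring⟩
      have : x - a = b := by rw [← hba]; ring
      rw [this]; exact hb
    · intro q hq
      rw [Finset.mem_coe, mem_reps] at hq
      have : x - q.1 = q.2 := by rw [← hq.2.2]; ring
      show (q.1, x - q.1) = q
      rw [this]
    · intro a ha
      rfl
  have himg : (B.image (fun b => x - b)).card = B.card :=
    Finset.card_image_of_injective _ (fun u v h => by rwa [sub_right_inj] at h)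
  have h1 := Finset.card_union_add_card_inter A (B.image (fun b => x - b))
  have h2 : (A ∪ B.image (fun b => x - b)).card ≤ p := by
    calc (A ∪ B.image (fun b => x - b)).card ≤ (Finset.univ : Finset (ZMod p)).card :=
          Finset.card_le_card (Finset.subset_univ _)
      _ = p := by rw [Finset.card_univ, ZMod.card]
  omega

lemma sum_Bc (A B : Finset (ZMod p)) :
    (∑ c ∈ Finset.univ \ B, (reps A B c).card) + cnt A B = A.card * B.card := by
  rw [cnt_eq_sum_B, ← sum_reps_card A B]
  exact Finset.sum_sdiff (Finset.subset_univ B)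

lemma phi_add_D (A B : Finset (ZMod p)) (m : ℕ) :
    phi A B m + (∑ x : ZMod p, ((reps A B x).card - m)) = A.card * B.card := by
  rw [← sum_reps_card A B, phi, ← Finset.sum_add_distrib]
  apply Finset.sum_congr rfl
  intro x _
  omega

lemma cnt_upper (hp : p.Prime) (A B : Finset (ZMod p)) (m : ℕ)
    (hmA : m ≤ A.card) (hmB : m ≤ B.card) (hN : A.card + B.card ≤ p + m) :
    (cnt A B : ℤ) + m * A.card ≤ (A.card : ℤ) * B.card + m * m := by
  have h1 : cnt A B ≤ B.card * m + (∑ x : ZMod p, ((reps A B x).card - m)) := by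
    rw [cnt_eq_sum_B]
    calc ∑ c ∈ B, (reps A B c).card ≤ ∑ c ∈ B, (m + ((reps A B c).card - m)) :=
          Finset.sum_le_sum (fun c _ => by omega)
      _ = B.card * m + ∑ c ∈ B, ((reps A B c).card - m) := by
          rw [Finset.sum_add_distrib, Finset.sum_const, smul_eq_mul]
      _ ≤ B.card * m + ∑ x : ZMod p, ((reps A B x).card - m) := by
          apply Nat.add_le_add_left
          exact Finset.sum_le_sum_of_subset (Finset.subset_univ B)
  have h2 := phi_add_D A B m
  have h3 := pollard hp m B A hmA hmB hN
  zify at h1 h2 h3 ⊢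
  nlinarith [h1, h2, h3]

lemma cnt_lower (hp : p.Prime) (A B : Finset (ZMod p)) (m : ℕ)
    (hmA : m ≤ A.card) (hmB : m ≤ B.card) (hN : A.card + B.card ≤ p + m) :
    (m : ℤ) * A.card + 2 * m * B.card ≤ (cnt A B : ℤ) + m * p + m * m := by
  have h0 := sum_Bc A B
  have hBc : (Finset.univ \ B).card + B.card = p := by
    rw [Finset.card_sdiff_of_subset (Finset.subset_univ B), Finset.card_univ, ZMod.card]
    have : B.card ≤ p := by
      calc B.card ≤ (Finset.univ : Finset (ZMod p)).card := Finset.card_le_card (Finset.subset_univ _)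
        _ = p := by rw [Finset.card_univ, ZMod.card]
    omega
  have h1 : (∑ c ∈ Finset.univ \ B, (reps A B c).card)
      ≤ (Finset.univ \ B).card * m + (∑ x : ZMod p, ((reps A B x).card - m)) := by
    calc ∑ c ∈ Finset.univ \ B, (reps A B c).card
        ≤ ∑ c ∈ Finset.univ \ B, (m + ((reps A B c).card - m)) :=
          Finset.sum_le_sum (fun c _ => by omega)
      _ = (Finset.univ \ B).card * m + ∑ c ∈ Finset.univ \ B, ((reps A B c).card - m) := by
          rw [Finset.sum_add_distrib, Finset.sum_const, smul_eq_mul]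
      _ ≤ (Finset.univ \ B).card * m + ∑ x : ZMod p, ((reps A B x).card - m) := by
          apply Nat.add_le_add_left
          exact Finset.sum_le_sum_of_subset (Finset.sdiff_subset.trans (Finset.subset_univ _))
  have h2 := phi_add_D A B m
  have h3 := pollard hp m B A hmA hmB hN
  zify at h0 h1 h2 h3 hBc ⊢
  nlinarith [h0, h1, h2, h3, hBc]
lemma div4_eq (X r : ℤ) (h0 : 0 ≤ r) (h1 : r < 4) : (r + 4 * X) / 4 = X := by
  rw [Int.add_mul_ediv_left r X (by norm_num : (4:ℤ) ≠ 0),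
    Int.ediv_eq_zero_of_lt h0 h1, zero_add]

lemma cnt_ge_f (hp : p.Prime) (hp3 : 3 ≤ p) {s t : ℕ}
    (hs1 : 1 ≤ s) (hs2 : s + 1 ≤ p) (ht1 : 1 ≤ t) (ht2 : t + 1 ≤ p)
    (A B : Finset (ZMod p)) (hA : A.card = s) (hB : B.card = t) :
    fBound p s t ≤ (cnt A B : ℤ) := by
  rw [fBound]
  split_ifs with h1 h2
  · exact Int.natCast_nonneg _
  · -- middle case
    have h1' : p + 2 ≤ s + 2 * t := by omega
    have h2' : 2 * t + 2 ≤ p + s := by omega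
    set m : ℕ := (s + 2 * t - p) / 2 with hm
    have hlow := cnt_lower hp A B m (by rw [hA]; omega) (by rw [hB]; omega)
      (by rw [hA, hB]; omega)
    rw [hA, hB] at hlow
    have hX : (m : ℤ) * ((s : ℤ) + 2 * t - p - m) ≤ (cnt A B : ℤ) := by
      push_cast at hlow ⊢
      nlinarith [hlow]
    rcases Nat.even_or_odd (s + 2 * t - p) with ⟨c, hc⟩ | ⟨c, hc⟩
    · have hEq : ((s : ℤ) + 2 * t - p) ^ 2
          = 0 + 4 * ((m : ℤ) * ((s : ℤ) + 2 * t - p - m)) := by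
        have h3 : s + 2 * t = p + 2 * m := by omega
        have hcast : (s : ℤ) + 2 * t - p = 2 * m := by
          have h4 : ((s + 2 * t : ℕ) : ℤ) = ((p + 2 * m : ℕ) : ℤ) := by rw [h3]
          push_cast at h4
          linarith
        rw [hcast]; ring
      rw [hEq, div4_eq _ _ le_rfl (by norm_num)]
      exact hX
    · have hEq : ((s : ℤ) + 2 * t - p) ^ 2
          = 1 + 4 * ((m : ℤ) * ((s : ℤ) + 2 * t - p - m)) := by
        have h3 : s + 2 * t = p + (2 * m + 1) := by omega
        have hcast : (s : ℤ) + 2 * t - p = 2 * m + 1 := by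
          have h4 : ((s + 2 * t : ℕ) : ℤ) = ((p + (2 * m + 1) : ℕ) : ℤ) := by rw [h3]
          push_cast at h4
          linarith
        rw [hcast]; ring
      rw [hEq, div4_eq _ _ (by norm_num) (by norm_num)]
      exact hX
  · -- top case : pigeonhole
    have h2' : p + s ≤ 2 * t + 1 := by omega
    have hpt : ∀ a ∈ A, (2 * (t : ℤ) - p) ≤ ((B.filter (fun b => a + b ∈ B)).card : ℤ) := by
      intro a _
      have h5 := filter_card_ge B a
      rw [hB] at h5
      have h6 : (t : ℤ) + t ≤ (p : ℤ) + ((B.filter (fun b => a + b ∈ B)).card : ℤ) := by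
        exact_mod_cast h5
      linarith
    have hsum := Finset.card_nsmul_le_sum A
      (fun a => ((B.filter (fun b => a + b ∈ B)).card : ℤ)) _ hpt
    have hcnt : (cnt A B : ℤ) = ∑ a ∈ A, ((B.filter (fun b => a + b ∈ B)).card : ℤ) := by
      rw [cnt_eq_sum_A]
      push_cast
      rfl
    rw [hcnt]
    calc (s : ℤ) * (2 * t - p) = A.card • (2 * (t : ℤ) - p) := by
          rw [hA, nsmul_eq_mul]
      _ ≤ _ := hsum

lemma cnt_le_g (hp : p.Prime) (hp3 : 3 ≤ p) {s t : ℕ}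
    (hs1 : 1 ≤ s) (hs2 : s + 1 ≤ p) (ht1 : 1 ≤ t) (ht2 : t + 1 ≤ p)
    (A B : Finset (ZMod p)) (hA : A.card = s) (hB : B.card = t) :
    (cnt A B : ℤ) ≤ gBound p s t := by
  rw [gBound]
  split_ifs with h1 h2
  · -- 2t ≤ s : cnt ≤ t^2
    have h1' : 2 * t ≤ s := by exact_mod_cast h1
    have hup := cnt_upper hp A B t (by omega) (by omega) (by omega)
    rw [hA, hB] at hup
    push_cast at hup ⊢
    nlinarith [hup]
  · -- middle case
    have h1' : s + 1 ≤ 2 * t := by omega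
    have h2' : 2 * t + s + 1 ≤ 2 * p := by omega
    set m : ℕ := s / 2 with hm
    have hup := cnt_upper hp A B m (by rw [hA]; omega) (by rw [hB]; omega)
      (by rw [hA, hB]; omega)
    rw [hA, hB] at hup
    have hX : (cnt A B : ℤ) ≤ (s : ℤ) * t - m * s + m * m := by
      push_cast at hup ⊢
      linarith
    rcases Nat.even_or_odd s with ⟨c, hc⟩ | ⟨c, hc⟩
    · have h3 : s = 2 * m := by omega
      have hcast : (s : ℤ) = 2 * m := by exact_mod_cast h3
      have hEq : (s : ℤ) * (4 * t - s) + 3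
          = 3 + 4 * ((s : ℤ) * t - m * s + m * m) := by
        rw [hcast]; ring
      rw [hEq, div4_eq _ _ (by norm_num) (by norm_num)]
      exact hX
    · have h3 : s = 2 * m + 1 := by omega
      have hcast : (s : ℤ) = 2 * m + 1 := by exact_mod_cast h3
      have hEq : (s : ℤ) * (4 * t - s) + 3
          = 2 + 4 * ((s : ℤ) * t - m * s + m * m) := by
        rw [hcast]; ring
      rw [hEq, div4_eq _ _ (by norm_num) (by norm_num)]
      exact hX
  · -- top case : pigeonhole on complement
    have h2' : 2 * p ≤ 2 * t + s := by omega
    have h0 := sum_Bc A B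
    have hBc : (Finset.univ \ B).card + B.card = p := by
      rw [Finset.card_sdiff_of_subset (Finset.subset_univ B), Finset.card_univ, ZMod.card]
      have : B.card ≤ p := by
        calc B.card ≤ (Finset.univ : Finset (ZMod p)).card :=
              Finset.card_le_card (Finset.subset_univ _)
          _ = p := by rw [Finset.card_univ, ZMod.card]
      omega
    have hpt : ∀ c ∈ Finset.univ \ B, ((s : ℤ) + t - p) ≤ ((reps A B c).card : ℤ) := by
      intro c _
      have h5 := reps_card_ge A B c
      rw [hA, hB] at h5
      have h6 : (s : ℤ) + t ≤ (p : ℤ) + ((reps A B c).card : ℤ) := by exact_mod_cast h5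
      linarith
    have hsum := Finset.card_nsmul_le_sum (Finset.univ \ B)
      (fun c => ((reps A B c).card : ℤ)) _ hpt
    have h0' : (∑ c ∈ Finset.univ \ B, ((reps A B c).card : ℤ)) + (cnt A B : ℤ)
        = (s : ℤ) * t := by
      rw [hA, hB] at h0
      exact_mod_cast h0
    have hcard : ((Finset.univ \ B).card : ℤ) = (p : ℤ) - t := by
      rw [hB] at hBc
      have : (((Finset.univ \ B).card + t : ℕ) : ℤ) = (p : ℤ) := by exact_mod_cast hBc
      push_cast at this
      linarith
    have hsmul : ((Finset.univ \ B).card) • ((s : ℤ) + t - p)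
        = ((p : ℤ) - t) * ((s : ℤ) + t - p) := by
      rw [nsmul_eq_mul, hcard]
    rw [hsmul] at hsum
    nlinarith [hsum, h0']
-- Gauss sums
def GG (n : ℕ) : ℕ := ∑ i ∈ Finset.range n, i

lemma GG_succ (n : ℕ) : GG (n + 1) = GG n + n := Finset.sum_range_succ _ _

lemma GG_mono {a b : ℕ} (h : a ≤ b) : GG a ≤ GG b :=
  Finset.sum_le_sum_of_subset (Finset.range_subset_range.2 h)

lemma GG2 (n : ℕ) : 2 * GG n + n = n * n := by
  have h := Finset.sum_range_id_mul_two n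
  rcases n with _ | m
  · simp [GG]
  · have h2 : GG (m + 1) * 2 = (m + 1) * m := h
    have : (m + 1) * m + (m + 1) = (m + 1) * (m + 1) := by ring
    omega

lemma sum_Ico_tsub (t a b : ℕ) :
    ∑ k ∈ Finset.Ico a b, (t - k) = GG (t + 1 - a) - GG (t + 1 - b) := by
  induction b with
  | zero =>
    rw [Finset.Ico_eq_empty (by omega)]
    have := GG_mono (show t + 1 - a ≤ t + 1 - 0 by omega)
    simp only [Finset.sum_empty]
    omega
  | succ b ih =>
    rcases le_or_gt a b with hab | hab
    · rw [Finset.sum_Ico_succ_top hab, ih]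
      have h1 : GG (t + 1 - b) = GG (t - b) + (t - b) := by
        rcases le_or_gt b t with h | h
        · have : t + 1 - b = (t - b) + 1 := by omega
          rw [this, GG_succ]
        · have h2 : t + 1 - b = 0 ∨ t + 1 - b = 1 := by omega
          have h3 : t - b = 0 := by omega
          rcases h2 with h2 | h2 <;> simp [h2, h3, GG]
      have h2 : GG (t + 1 - (b + 1)) = GG (t - b) := by
        congr 1
        omega
      have h3 : GG (t + 1 - b) ≤ GG (t + 1 - a) := GG_mono (by omega)
      omega
    · rw [Finset.Ico_eq_empty (by omega)]
      have := GG_mono (show t + 1 - a ≤ t + 1 - (b + 1) by omega)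
      simp only [Finset.sum_empty]
      omega

lemma sum_Ico_tsub' (c a b : ℕ) :
    ∑ k ∈ Finset.Ico a b, (k - c) = GG (b - c) - GG (a - c) := by
  induction b with
  | zero =>
    rw [Finset.Ico_eq_empty (by omega)]
    simp [GG]
  | succ b ih =>
    rcases le_or_gt a b with hab | hab
    · rw [Finset.sum_Ico_succ_top hab, ih]
      have h1 : GG (b + 1 - c) = GG (b - c) + (b - c) := by
        rcases le_or_gt c b with h | h
        · have : b + 1 - c = (b - c) + 1 := by omega
          rw [this, GG_succ]
        · have h2 : b + 1 - c = 0 ∨ b + 1 - c = 1 := by omega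
          have h3 : b - c = 0 := by omega
          rcases h2 with h2 | h2 <;> simp [h2, h3, GG]
      have h3 : GG (a - c) ≤ GG (b - c) := GG_mono (by omega)
      omega
    · rw [Finset.Ico_eq_empty (by omega)]
      have := GG_mono (show b + 1 - c ≤ a - c by omega)
      simp only [Finset.sum_empty]
      omega

-- the weight function
def wt (p t k : ℕ) : ℕ := (t - k) + (t + k - p)

lemma sum_wt_Ico {t a b : ℕ} (ht : t ≤ p) :
    ∑ k ∈ Finset.Ico a b, wt p t k
      = (GG (t + 1 - a) - GG (t + 1 - b)) + (GG (b - (p - t)) - GG (a - (p - t))) := by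
  unfold wt
  rw [Finset.sum_add_distrib, sum_Ico_tsub]
  congr 1
  rw [← sum_Ico_tsub' (p - t) a b]
  apply Finset.sum_congr rfl
  intro k _
  omega

-- interval B inside ZMod p
lemma castInjOn : Set.InjOn (fun k : ℕ => (k : ZMod p)) (Finset.range p) := by
  intro a ha b hb h
  simp only [Finset.coe_range, Set.mem_Iio] at ha hb
  have h2 := congrArg ZMod.val h
  simp only at h2
  rwa [ZMod.val_cast_of_lt ha, ZMod.val_cast_of_lt hb] at h2

def Bint (p t : ℕ) [NeZero p] : Finset (ZMod p) :=
  (Finset.range t).image (fun j : ℕ => (j : ZMod p))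

lemma Bint_card (ht : t ≤ p) : (Bint p t).card = t := by
  rw [Bint, Finset.card_image_of_injOn, Finset.card_range]
  exact castInjOn.mono (by simp only [Finset.coe_range]; exact Set.Iio_subset_Iio ht)

lemma mem_Bint (ht : t ≤ p) {x : ZMod p} : x ∈ Bint p t ↔ x.val < t := by
  constructor
  · intro hx
    obtain ⟨j, hj, rfl⟩ := Finset.mem_image.1 hx
    rw [ZMod.val_cast_of_lt (lt_of_lt_of_le (Finset.mem_range.1 hj) ht)]
    exact Finset.mem_range.1 hj
  · intro hv
    exact Finset.mem_image.2 ⟨x.val, Finset.mem_range.2 hv, ZMod.natCast_rightInverse x⟩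

lemma filter_w (ht2 : t + 1 ≤ p) {k : ℕ} (hk : k < p) :
    ((Bint p t).filter (fun b => (k : ZMod p) + b ∈ Bint p t)).card = wt p t k := by
  have ht : t ≤ p := by omega
  rw [Bint, Finset.filter_image, Finset.card_image_of_injOn
    (castInjOn.mono (by
      intro j hj
      simp only [Finset.coe_filter, Set.mem_setOf_eq, Finset.mem_range] at hj
      simp only [Finset.coe_range, Set.mem_Iio]
      omega))]
  have hcond : (Finset.range t).filter (fun j : ℕ => (k : ZMod p) + (j : ZMod p) ∈ Bint p t)
      = (Finset.range t).filter (fun j => k + j < t)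
        ∪ (Finset.range t).filter (fun j => p ≤ k + j) := by
    ext j
    simp only [Finset.mem_filter, Finset.mem_union, Finset.mem_range]
    have hcast : (k : ZMod p) + (j : ZMod p) = ((k + j : ℕ) : ZMod p) := by push_cast; ring
    rw [hcast, mem_Bint ht, ZMod.val_natCast]
    by_cases hjt : j < t
    · have hmlt : (k + j) % p < p := Nat.mod_lt _ (by omega)
      have hmod : (k + j) % p = k + j ∨ (k + j) % p + p = k + j := by
        rcases Nat.lt_or_ge (k + j) p with h | h
        · left; exact Nat.mod_eq_of_lt h
        · right
          have h1 : k + j - p < p := by omega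
          have h2 : (k + j) % p = (k + j - p) % p := Nat.mod_eq_sub_mod h
          rw [h2, Nat.mod_eq_of_lt h1]
          omega
      rcases hmod with h | h <;> omega
    · constructor
      · rintro ⟨hj, -⟩
        exact absurd hj hjt
      · rintro (⟨hj, -⟩ | ⟨hj, -⟩) <;> exact absurd hj hjt
  have hback : Finset.image (fun j : ℕ => (j : ZMod p)) (Finset.range t) = Bint p t := rfl
  rw [hback, hcond, Finset.card_union_of_disjoint (by
    rw [Finset.disjoint_left]
    intro j h1 h2
    simp only [Finset.mem_filter, Finset.mem_range] at h1 h2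
    omega)]
  have hc1 : (Finset.range t).filter (fun j => k + j < t) = Finset.range (t - k) := by
    ext j
    simp only [Finset.mem_filter, Finset.mem_range]
    omega
  have hc2 : (Finset.range t).filter (fun j => p ≤ k + j) = Finset.Ico (p - k) t := by
    ext j
    simp only [Finset.mem_filter, Finset.mem_range, Finset.mem_Ico]
    omega
  rw [hc1, hc2, Finset.card_range, Nat.card_Ico]
  unfold wt
  omega

lemma image_cast_card {S : Finset ℕ} (hS : S ⊆ Finset.range p) :
    (S.image (fun k : ℕ => (k : ZMod p))).card = S.card :=
  Finset.card_image_of_injOn (castInjOn.mono (by exact_mod_cast hS))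

lemma cnt_image (ht2 : t + 1 ≤ p) {S : Finset ℕ} (hS : S ⊆ Finset.range p) :
    cnt (S.image (fun k : ℕ => (k : ZMod p))) (Bint p t) = ∑ k ∈ S, wt p t k := by
  rw [cnt_eq_sum_A, Finset.sum_image (fun x hx y hy h =>
    castInjOn (by exact_mod_cast hS hx) (by exact_mod_cast hS hy) h)]
  apply Finset.sum_congr rfl
  intro k hk
  exact filter_w ht2 (Finset.mem_range.1 (hS hk))
lemma wt_le (ht2 : t + 1 ≤ p) {k : ℕ} (hk : k < p) : wt p t k ≤ t := by
  unfold wt; omega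

lemma wt_ge (ht2 : t + 1 ≤ p) {k : ℕ} (hk : k < p) : 2 * t ≤ p + wt p t k := by
  unfold wt; omega

lemma wt_hit (ht2 : t + 1 ≤ p) {v : ℕ} (h1 : 2 * t ≤ p + v) (h2 : v ≤ t) :
    t - v < p ∧ wt p t (t - v) = v := by
  unfold wt; omega

lemma exchange {t : ℕ} (ht2 : t + 1 ≤ p) (S T : Finset ℕ)
    (hS : S ⊆ Finset.range p) (hT : T ⊆ Finset.range p)
    (hcard : T.card = S.card) (hlt : ∑ k ∈ T, wt p t k < ∑ k ∈ S, wt p t k) :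
    ∃ S', S' ⊆ Finset.range p ∧ S'.card = S.card ∧
      (∑ k ∈ S', wt p t k) + 1 = ∑ k ∈ S, wt p t k := by
  by_cases hpair : ∃ k ∈ S, ∃ k' ∈ Finset.range p, k' ∉ S ∧ wt p t k' + 1 = wt p t k
  · obtain ⟨k, hk, k', hk'r, hk'S, hw⟩ := hpair
    refine ⟨insert k' (S.erase k), ?_, ?_, ?_⟩
    · exact Finset.insert_subset hk'r ((Finset.erase_subset _ _).trans hS)
    · rw [Finset.card_insert_of_notMem (fun hc => hk'S (Finset.mem_of_mem_erase hc)),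
        Finset.card_erase_of_mem hk]
      have : 1 ≤ S.card := Finset.card_pos.2 ⟨k, hk⟩
      omega
    · rw [Finset.sum_insert (fun hc => hk'S (Finset.mem_of_mem_erase hc))]
      have hsum := Finset.sum_erase_add S (wt p t) hk
      omega
  · exfalso
    push_neg at hpair
    have hSne : S.Nonempty := by
      rcases Finset.eq_empty_or_nonempty S with rfl | h
      · have hT0 : T = ∅ := Finset.card_eq_zero.1 (by simpa using hcard)
        rw [hT0] at hlt
        simp at hlt
      · exact h
    have hIne : (S.image (wt p t)).Nonempty := hSne.image _
    set u := (S.image (wt p t)).max' hIne with hu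
    obtain ⟨k₀, hk₀S, hk₀⟩ := Finset.mem_image.1 ((S.image (wt p t)).max'_mem hIne)
    have hub : ∀ k ∈ S, wt p t k ≤ u := fun k hk =>
      Finset.le_max' _ _ (Finset.mem_image_of_mem _ hk)
    have hut : u ≤ t := by
      rw [hu, ← hk₀]
      exact wt_le ht2 (Finset.mem_range.1 (hS hk₀S))
    have claim : ∀ d k', k' ∈ Finset.range p → wt p t k' + 1 + d = u → k' ∈ S := by
      intro d
      induction d with
      | zero =>
        intro k' hk' hw
        by_contra hns
        exact hpair k₀ hk₀S k' hk' hns (by omega)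
      | succ d ih =>
        intro k' hk' hw
        have hvge : 2 * t ≤ p + wt p t k' := wt_ge ht2 (Finset.mem_range.1 hk')
        obtain ⟨hlt1, hweq⟩ := wt_hit ht2 (v := wt p t k' + 1) (by omega) (by omega)
        have hmem := ih (t - (wt p t k' + 1)) (Finset.mem_range.2 hlt1) (by omega)
        by_contra hns
        exact hpair _ hmem k' hk' hns (by omega)
    have hout : ∀ k', k' ∈ Finset.range p → k' ∉ S → u ≤ wt p t k' := by
      intro k' hk' hns
      by_contra hlt2
      push_neg at hlt2
      exact hns (claim (u - wt p t k' - 1) k' hk' (by omega))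
    have h1 : ∑ k ∈ S \ T, wt p t k ≤ (S \ T).card * u := by
      calc ∑ k ∈ S \ T, wt p t k ≤ ∑ _k ∈ S \ T, u :=
            Finset.sum_le_sum (fun k hk => hub k (Finset.mem_sdiff.1 hk).1)
        _ = (S \ T).card * u := by rw [Finset.sum_const, smul_eq_mul]
    have h2 : (T \ S).card * u ≤ ∑ k ∈ T \ S, wt p t k := by
      calc (T \ S).card * u = ∑ _k ∈ T \ S, u := by rw [Finset.sum_const, smul_eq_mul]
        _ ≤ ∑ k ∈ T \ S, wt p t k := Finset.sum_le_sum (fun k hk =>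
            hout k (hT (Finset.mem_sdiff.1 hk).1) (Finset.mem_sdiff.1 hk).2)
    have hST := Finset.card_sdiff_add_card_inter S T
    have hTS := Finset.card_sdiff_add_card_inter T S
    rw [Finset.inter_comm] at hTS
    have hcs : (S \ T).card = (T \ S).card := by omega
    rw [hcs] at h1
    have hsS := Finset.sum_inter_add_sum_sdiff S T (wt p t)
    have hsT := Finset.sum_inter_add_sum_sdiff T S (wt p t)
    rw [Finset.inter_comm] at hsT
    omega

lemma achieve {s t : ℕ} (ht2 : t + 1 ≤ p) (Sf Sg : Finset ℕ)
    (hSf : Sf ⊆ Finset.range p) (hSg : Sg ⊆ Finset.range p)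
    (hcf : Sf.card = s) (hcg : Sg.card = s) :
    ∀ d n, (∑ k ∈ Sg, wt p t k) - n = d → (∑ k ∈ Sf, wt p t k) ≤ n →
      n ≤ (∑ k ∈ Sg, wt p t k) →
      ∃ S, S ⊆ Finset.range p ∧ S.card = s ∧ ∑ k ∈ S, wt p t k = n := by
  intro d
  induction d with
  | zero =>
    intro n h0 _ h2
    exact ⟨Sg, hSg, hcg, by omega⟩
  | succ d ih =>
    intro n h0 h1 h2
    obtain ⟨S1, hS1r, hS1c, hS1s⟩ := ih (n + 1) (by omega) (by omega) (by omega)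
    obtain ⟨S', h'r, h'c, h's⟩ := exchange ht2 S1 Sf hS1r hSf (by rw [hcf, hS1c]) (by omega)
    exact ⟨S', h'r, by rw [h'c, hS1c], by omega⟩
lemma Ico_subset_range {a b n : ℕ} (h : b ≤ n) : Finset.Ico a b ⊆ Finset.range n := by
  intro k hk
  rw [Finset.mem_Ico] at hk
  exact Finset.mem_range.2 (by omega)

lemma exists_Sf (hp3 : 3 ≤ p) {s t : ℕ}
    (hs1 : 1 ≤ s) (hs2 : s + 1 ≤ p) (ht1 : 1 ≤ t) (ht2 : t + 1 ≤ p) :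
    ∃ Sf : Finset ℕ, Sf ⊆ Finset.range p ∧ Sf.card = s ∧
      ((∑ k ∈ Sf, wt p t k : ℕ) : ℤ) = fBound p s t := by
  rw [fBound]
  split_ifs with h1 h2
  · -- 2t + s ≤ p + 1
    have h1' : 2 * t + s ≤ p + 1 := by omega
    refine ⟨Finset.Ico t (t + s), Ico_subset_range (by omega), by rw [Nat.card_Ico]; omega, ?_⟩
    have hsum : ∑ k ∈ Finset.Ico t (t + s), wt p t k = 0 := by
      rw [sum_wt_Ico (by omega)]
      have e1 : GG (t + 1 - t) = 0 := by
        rw [show t + 1 - t = 1 by omega]; simp [GG]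
      have e2 : GG (t + s - (p - t)) = 0 := by
        have : t + s - (p - t) ≤ 1 := by omega
        have h0 : GG (t + s - (p - t)) ≤ GG 1 := GG_mono this
        simpa [GG] using h0
      omega
    rw [hsum]
    simp
  · -- middle case
    have hK1 : p + 2 ≤ s + 2 * t := by omega
    have hK2 : 2 * t + 2 ≤ p + s := by omega
    obtain ⟨h, hh⟩ : ∃ h, h = (s + 2 * t - p) / 2 := ⟨_, rfl⟩
    obtain ⟨K, hK⟩ : ∃ K, K = s + 2 * t - p := ⟨_, rfl⟩
    have hhb : 1 ≤ h ∧ h + 1 ≤ t ∧ h + 1 ≤ s ∧ 2 * t ≤ p + h ∧ t - h + s ≤ p := by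
      constructor; · omega
      constructor; · omega
      constructor; · omega
      constructor; · omega
      omega
    obtain ⟨hb1, hb2, hb3, hb4, hb5⟩ := hhb
    refine ⟨Finset.Ico (t - h) (t - h + s), Ico_subset_range (by omega),
      by rw [Nat.card_Ico]; omega, ?_⟩
    have hsum : ∑ k ∈ Finset.Ico (t - h) (t - h + s), wt p t k = GG (h + 1) + GG (K - h) := by
      rw [sum_wt_Ico (by omega)]
      rw [show t + 1 - (t - h) = h + 1 by omega]
      rw [show t + 1 - (t - h + s) = 0 by omega]
      rw [show t - h + s - (p - t) = K - h by omega]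
      rw [show t - h - (p - t) = 0 by omega]
      have e0 : GG 0 = 0 := by simp [GG]
      omega
    rw [hsum]
    have g1 := GG2 (h + 1)
    have g2 := GG2 (K - h)
    have hKZ : ((K : ℕ) : ℤ) = (s : ℤ) + 2 * t - p := by omega
    rw [← hKZ]
    rcases Nat.even_or_odd K with ⟨c, hc⟩ | ⟨c, hc⟩
    · have hch : c = h := by omega
      have hdiv : ((K : ℕ) : ℤ) ^ 2 = 0 + 4 * ((GG (h + 1) + GG (K - h) : ℕ) : ℤ) := by
        have hKh : K - h = h := by omega
        rw [hKh] at g2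
        have hKc : ((K : ℕ) : ℤ) = 2 * (h : ℤ) := by omega
        rw [hKc]
        rw [hKh]
        push_cast
        push_cast at g1 g2
        linarith [g1, g2]
      rw [hdiv, div4_eq _ _ le_rfl (by norm_num)]
    · have hch : c = h := by omega
      have hdiv : ((K : ℕ) : ℤ) ^ 2 = 1 + 4 * ((GG (h + 1) + GG (K - h) : ℕ) : ℤ) := by
        have hKh : K - h = h + 1 := by omega
        rw [hKh] at g2
        have hKc : ((K : ℕ) : ℤ) = 2 * (h : ℤ) + 1 := by omega
        rw [hKc, hKh]
        push_cast
        push_cast at g1 g2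
        linarith [g1, g2]
      rw [hdiv, div4_eq _ _ (by norm_num) (by norm_num)]
  · -- top case
    have hc3 : p + s ≤ 2 * t + 1 := by omega
    have hst : s ≤ t := by omega
    have hpt : p ≤ 2 * t := by omega
    obtain ⟨M, hM⟩ : ∃ M, M = 2 * t - p := ⟨_, rfl⟩
    have hsM : s ≤ M + 1 := by omega
    refine ⟨Finset.Ico (p - t) (p - t + s), Ico_subset_range (by omega),
      by rw [Nat.card_Ico]; omega, ?_⟩
    have hsum : ∑ k ∈ Finset.Ico (p - t) (p - t + s), wt p t k
        = (GG (M + 1) - GG (M + 1 - s)) + GG s := by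
      rw [sum_wt_Ico (by omega)]
      rw [show t + 1 - (p - t) = M + 1 by omega]
      rw [show t + 1 - (p - t + s) = M + 1 - s by omega]
      rw [show p - t + s - (p - t) = s by omega]
      rw [show p - t - (p - t) = 0 by omega]
      have e0 : GG 0 = 0 := by simp [GG]
      omega
    rw [hsum]
    have g1 := GG2 (M + 1)
    have g2 := GG2 (M + 1 - s)
    have g3 := GG2 s
    have hmono : GG (M + 1 - s) ≤ GG (M + 1) := GG_mono (by omega)
    have hMZ : ((M : ℕ) : ℤ) = 2 * (t : ℤ) - p := by omega
    zify [hsM] at g1 g2 g3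
    zify [hmono]
    rw [← hMZ]
    linarith [g1, g2, g3]
lemma exists_Sg (hp3 : 3 ≤ p) {s t : ℕ}
    (hs1 : 1 ≤ s) (hs2 : s + 1 ≤ p) (ht1 : 1 ≤ t) (ht2 : t + 1 ≤ p) :
    ∃ Sg : Finset ℕ, Sg ⊆ Finset.range p ∧ Sg.card = s ∧
      ((∑ k ∈ Sg, wt p t k : ℕ) : ℤ) = gBound p s t := by
  have hGG0 : GG 0 = 0 := by simp [GG]
  have hGG1 : GG 1 = 0 := by simp [GG]
  rw [gBound]
  split_ifs with h1 h2
  · -- 2t ≤ s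
    have h1' : 2 * t ≤ s := by omega
    have hdisj : Disjoint (Finset.Ico 0 (s - t + 1)) (Finset.Ico (p - t + 1) p) := by
      rw [Finset.disjoint_left]
      intro k hk hk2
      rw [Finset.mem_Ico] at hk hk2
      omega
    refine ⟨Finset.Ico 0 (s - t + 1) ∪ Finset.Ico (p - t + 1) p, ?_, ?_, ?_⟩
    · exact Finset.union_subset (Ico_subset_range (by omega)) (Ico_subset_range le_rfl)
    · rw [Finset.card_union_of_disjoint hdisj, Nat.card_Ico, Nat.card_Ico]
      omega
    · rw [Finset.sum_union hdisj, sum_wt_Ico (by omega), sum_wt_Ico (by omega)]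
      rw [show t + 1 - 0 = t + 1 by omega]
      rw [show t + 1 - (s - t + 1) = 0 by omega]
      rw [show s - t + 1 - (p - t) = 0 by omega]
      rw [show (0 : ℕ) - (p - t) = 0 by omega]
      rw [show t + 1 - (p - t + 1) = 0 by omega]
      rw [show t + 1 - p = 0 by omega]
      rw [show p - (p - t) = t by omega]
      rw [show p - t + 1 - (p - t) = 1 by omega]
      have g1 := GG2 (t + 1)
      have g2 := GG2 t
      have hZ : ((GG (t + 1) - GG 0 + (GG 0 - GG 0) + (GG 0 - GG 0 + (GG t - GG 1)) : ℕ) : ℤ)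
          = ((GG (t + 1) : ℕ) : ℤ) + ((GG t : ℕ) : ℤ) := by omega
      rw [hZ]
      zify at g1 g2
      nlinarith [g1, g2]
  · -- middle case
    have h1' : s + 1 ≤ 2 * t := by omega
    have h2' : 2 * t + s + 1 ≤ 2 * p := by omega
    obtain ⟨d, hd⟩ : ∃ d, d = s / 2 := ⟨_, rfl⟩
    obtain ⟨c, hc⟩ : ∃ c, c = s - d := ⟨_, rfl⟩
    have hb : 1 ≤ c ∧ c ≤ t ∧ c + t ≤ p ∧ d + t + 1 ≤ p ∧ d ≤ t ∧ c + d = s := by omega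
    obtain ⟨hb1, hb2, hb3, hb4, hb5, hb6⟩ := hb
    have hdisj : Disjoint (Finset.Ico 0 c) (Finset.Ico (p - d) p) := by
      rw [Finset.disjoint_left]
      intro k hk hk2
      rw [Finset.mem_Ico] at hk hk2
      omega
    refine ⟨Finset.Ico 0 c ∪ Finset.Ico (p - d) p, ?_, ?_, ?_⟩
    · exact Finset.union_subset (Ico_subset_range (by omega)) (Ico_subset_range le_rfl)
    · rw [Finset.card_union_of_disjoint hdisj, Nat.card_Ico, Nat.card_Ico]
      omega
    · rw [Finset.sum_union hdisj, sum_wt_Ico (by omega), sum_wt_Ico (by omega)]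
      rw [show t + 1 - 0 = t + 1 by omega]
      rw [show c - (p - t) = 0 by omega]
      rw [show (0 : ℕ) - (p - t) = 0 by omega]
      rw [show t + 1 - (p - d) = 0 by omega]
      rw [show t + 1 - p = 0 by omega]
      rw [show p - (p - t) = t by omega]
      rw [show p - d - (p - t) = t - d by omega]
      have g1 := GG2 (t + 1)
      have g2 := GG2 (t + 1 - c)
      have g3 := GG2 t
      have g4 := GG2 (t - d)
      have hm1 : GG (t + 1 - c) ≤ GG (t + 1) := GG_mono (by omega)
      have hm2 : GG (t - d) ≤ GG t := GG_mono (by omega)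
      have hZ : ((GG (t + 1) - GG (t + 1 - c) + (GG 0 - GG 0) + (GG 0 - GG 0 + (GG t - GG (t - d))) : ℕ) : ℤ)
          = ((GG (t + 1) : ℕ) : ℤ) - GG (t + 1 - c) + GG t - GG (t - d) := by omega
      rw [hZ]
      zify [show c ≤ t + 1 by omega] at g2
      zify [show d ≤ t by omega] at g4
      zify at g1 g3
      rcases Nat.even_or_odd s with ⟨m, hm⟩ | ⟨m, hm⟩
      · have hcm : (c : ℤ) = m := by omega
        have hdm : (d : ℤ) = m := by omega
        have hsm : (s : ℤ) = 2 * m := by omega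
        rw [hcm] at g2
        rw [hdm] at g4
        have hdiv : (s : ℤ) * (4 * t - s) + 3
            = 3 + 4 * (((GG (t + 1) : ℕ) : ℤ) - GG (t + 1 - c) + GG t - GG (t - d)) := by
          rw [hsm]
          linarith [g1, g2, g3, g4]
        rw [hdiv, div4_eq _ _ (by norm_num) (by norm_num)]
      · have hcm : (c : ℤ) = m + 1 := by omega
        have hdm : (d : ℤ) = m := by omega
        have hsm : (s : ℤ) = 2 * m + 1 := by omega
        rw [hcm] at g2
        rw [hdm] at g4
        have hdiv : (s : ℤ) * (4 * t - s) + 3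
            = 2 + 4 * (((GG (t + 1) : ℕ) : ℤ) - GG (t + 1 - c) + GG t - GG (t - d)) := by
          rw [hsm]
          linarith [g1, g2, g3, g4]
        rw [hdiv, div4_eq _ _ (by norm_num) (by norm_num)]
  · -- top case
    have h2' : 2 * p ≤ 2 * t + s := by omega
    have hts : p ≤ t + s - 1 ∧ p - t ≤ 2 * p - t - s ∧ 2 * p - t - s ≤ p ∧ p ≤ 2 * t - 1 := by
      omega
    obtain ⟨hts1, hts2, hts3, hts4⟩ := hts
    have hdisj : Disjoint (Finset.Ico 0 (p - t)) (Finset.Ico (2 * p - t - s) p) := by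
      rw [Finset.disjoint_left]
      intro k hk hk2
      rw [Finset.mem_Ico] at hk hk2
      omega
    refine ⟨Finset.Ico 0 (p - t) ∪ Finset.Ico (2 * p - t - s) p, ?_, ?_, ?_⟩
    · exact Finset.union_subset (Ico_subset_range (by omega)) (Ico_subset_range le_rfl)
    · rw [Finset.card_union_of_disjoint hdisj, Nat.card_Ico, Nat.card_Ico]
      omega
    · rw [Finset.sum_union hdisj, sum_wt_Ico (by omega), sum_wt_Ico (by omega)]
      rw [show t + 1 - 0 = t + 1 by omega]
      rw [show t + 1 - (p - t) = 2 * t + 1 - p by omega]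
      rw [show p - t - (p - t) = 0 by omega]
      rw [show (0 : ℕ) - (p - t) = 0 by omega]
      rw [show t + 1 - (2 * p - t - s) = 2 * t + s + 1 - 2 * p by omega]
      rw [show t + 1 - p = 0 by omega]
      rw [show p - (p - t) = t by omega]
      rw [show 2 * p - t - s - (p - t) = p - s by omega]
      have g1 := GG2 (t + 1)
      have g2 := GG2 (2 * t + 1 - p)
      have g3 := GG2 (2 * t + s + 1 - 2 * p)
      have g4 := GG2 t
      have g5 := GG2 (p - s)
      have hm1 : GG (2 * t + 1 - p) ≤ GG (t + 1) := GG_mono (by omega)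
      have hm2 : GG (p - s) ≤ GG t := GG_mono (by omega)
      have hZ : ((GG (t + 1) - GG (2 * t + 1 - p) + (GG 0 - GG 0)
            + (GG (2 * t + s + 1 - 2 * p) - GG 0 + (GG t - GG (p - s))) : ℕ) : ℤ)
          = ((GG (t + 1) : ℕ) : ℤ) - GG (2 * t + 1 - p) + GG (2 * t + s + 1 - 2 * p)
            + GG t - GG (p - s) := by omega
      rw [hZ]
      zify [show p ≤ 2 * t + 1 by omega] at g2
      zify [show 2 * p ≤ 2 * t + s + 1 by omega] at g3
      zify [show s ≤ p by omega] at g5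
      zify at g1 g4
      linarith [g1, g2, g3, g4, g5]
end Stmt17

theorem stmt_17 {p : ℕ} [NeZero p] (hp : p.Prime) (hodd : Odd p) {s t : ℕ}
    (hs1 : 1 ≤ s) (hs2 : s ≤ p - 1) (ht1 : 1 ≤ t) (ht2 : t ≤ p - 1) :
    {r : ℤ | ∃ A B : Finset (ZMod p), A.card = s ∧ B.card = t ∧
        (((A ×ˢ B ×ˢ B).filter (fun x => x.2.2 = x.1 + x.2.1)).card : ℤ) = r}
      = Set.Icc (fBound p s t) (gBound p s t) := by
  classical
  have hp2 : 2 ≤ p := hp.two_le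
  have hpne2 : p ≠ 2 := by
    rintro rfl
    rw [Nat.odd_iff] at hodd
    omega
  have hp3 : 3 ≤ p := by
    rcases Nat.lt_or_ge p 3 with h | h
    · interval_cases p <;> simp_all
    · exact h
  have hs2' : s + 1 ≤ p := by omega
  have ht2' : t + 1 ≤ p := by omega
  ext r
  simp only [Set.mem_setOf_eq, Set.mem_Icc]
  constructor
  · rintro ⟨A, B, hA, hB, rfl⟩
    exact ⟨Stmt17.cnt_ge_f hp hp3 hs1 hs2' ht1 ht2' A B hA hB,
      Stmt17.cnt_le_g hp hp3 hs1 hs2' ht1 ht2' A B hA hB⟩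
  · rintro ⟨hrf, hrg⟩
    obtain ⟨Sf, hSfr, hSfc, hSfs⟩ := Stmt17.exists_Sf hp3 hs1 hs2' ht1 ht2'
    obtain ⟨Sg, hSgr, hSgc, hSgs⟩ := Stmt17.exists_Sg hp3 hs1 hs2' ht1 ht2'
    have hr0 : 0 ≤ r := le_trans (by rw [← hSfs]; exact Int.natCast_nonneg _) hrf
    obtain ⟨n, rfl⟩ : ∃ n : ℕ, (n : ℤ) = r := ⟨r.toNat, Int.toNat_of_nonneg hr0⟩
    have hfn : (∑ k ∈ Sf, Stmt17.wt p t k) ≤ n := by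
      have h := hrf
      rw [← hSfs] at h
      exact_mod_cast h
    have hgn : n ≤ ∑ k ∈ Sg, Stmt17.wt p t k := by
      have h := hrg
      rw [← hSgs] at h
      exact_mod_cast h
    obtain ⟨S, hSr, hSc, hSs⟩ := Stmt17.achieve ht2' Sf Sg hSfr hSgr hSfc hSgc
      ((∑ k ∈ Sg, Stmt17.wt p t k) - n) n rfl hfn hgn
    refine ⟨S.image (fun k : ℕ => (k : ZMod p)), Stmt17.Bint p t, ?_, ?_, ?_⟩
    · rw [Stmt17.image_cast_card hSr, hSc]
    · exact Stmt17.Bint_card (by omega)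
    · have hc := Stmt17.cnt_image ht2' hSr
      rw [Stmt17.cnt] at hc
      rw [hc, hSs]
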